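/- For every real D > 0 there exist a finite set V of n = 6 vertices with distinct s, t ∈ V, an asymmetric metric d on V, and a feasible solution x to LP(α) with α = 1/2 whose cost Σ_{u,w} d(u,w)·x(u,w) is at most 5, such that every Hamiltonian s-t path has cost at least D. Consequently, as a relaxation of the asymmetric traveling salesman path problem, LP(1/2) has unbounded integrality gap. (The paper's bad-gap example at the start of Section 4.) -/

import Mathlib

open Finset

/-- `d` is an asymmetric metric: nonnegative, zero on the diagonal, and
satisfying the directed triangle inequality. -/
def IsAsymMetric {V : Type*} (d : V → V → ℝ) : Prop :=
  (∀ u w, 0 ≤ d u w) ∧ (∀ u, d u u = 0) ∧ (∀ u v w, d u w ≤ d u v + d v w)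

/-- The cost of a path, given as a list of vertices: the sum of `d` over
consecutive pairs. -/
def pathCost {V : Type*} (d : V → V → ℝ) : List V → ℝ
  | u :: w :: rest => d u w + pathCost d (w :: rest)
  | _ => 0

/-- `x` is a feasible solution to LP(α) on the vertex set `V` with source `s`
and sink `t`. -/
def LPFeasible {V : Type*} [Fintype V] [DecidableEq V] (s t : V) (α : ℝ)
    (x : V → V → ℝ) : Prop :=
  (∀ u w, 0 ≤ x u w) ∧
  (∀ v, v ≠ s → v ≠ t → ∑ u, x u v = ∑ u, x v u) ∧
  (∑ u, x s u = 1) ∧ (∑ u, x u t = 1) ∧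
  (∑ u, x u s = 0) ∧ (∑ u, x t u = 0) ∧
  (∀ S : Finset V, S.Nonempty → s ∉ S → α ≤ ∑ w ∈ S, ∑ u ∈ Sᶜ, x u w)

/-- `p` is a Hamiltonian `s`-`t` path: it lists every vertex exactly once,
starting at `s` and ending at `t`. -/
def IsHamPath {V : Type*} [Fintype V] (s t : V) (p : List V) : Prop :=
  p.Nodup ∧ (∀ v : V, v ∈ p) ∧ p.head? = some s ∧ p.getLast? = some t

/-- cheap arcs of the gadget -/
def cheapB : Fin 6 → Fin 6 → Bool := fun u w =>
  (u == w) || (u == 0 && w != 0) || (w == 5 && u != 5) ||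
  (u == 1 && w == 2) || (u == 3 && w == 4)

/-- levels -/
def lv (u : Fin 6) : ℝ :=
  if u = 1 then 1 else if u = 2 then 2 else if u = 3 then 1 else
  if u = 4 then 2 else if u = 5 then 3 else 0

/-- the metric, parametrized by the big cost `M` -/
def dM (M : ℝ) : Fin 6 → Fin 6 → ℝ := fun u w =>
  if cheapB u w then lv w - lv u else M

lemma dM_nonneg {M : ℝ} (hM : 0 ≤ M) : ∀ u w, 0 ≤ dM M u w := by
  intro u w
  fin_cases u <;> fin_cases w <;> simp [dM, cheapB, lv] <;> linarith

lemma dM_diag {M : ℝ} : ∀ u, dM M u u = 0 := by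
  intro u; fin_cases u <;> simp [dM, cheapB, lv]

lemma dM_tri {M : ℝ} (hM : 3 ≤ M) : ∀ u v w, dM M u w ≤ dM M u v + dM M v w := by
  intro u v w
  fin_cases u <;> fin_cases v <;> fin_cases w <;> simp [dM, cheapB, lv] <;> linarith

lemma dM_big {M : ℝ} {u w : Fin 6} (h : cheapB u w = false) : M ≤ dM M u w := by
  simp [dM, h]

/-- the LP solution -/
noncomputable def xSol (u w : Fin 6) : ℝ :=
  if (u = 0 ∧ w = 1) ∨ (u = 1 ∧ w = 2) ∨ (u = 2 ∧ w = 5) ∨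
     (u = 0 ∧ w = 3) ∨ (u = 3 ∧ w = 4) ∨ (u = 4 ∧ w = 5) then 1/2 else 0

lemma xSol_nonneg : ∀ u w, 0 ≤ xSol u w := by
  intro u w; unfold xSol; split <;> norm_num

lemma pathCost_nonneg {d : Fin 6 → Fin 6 → ℝ} (hd : ∀ u w, 0 ≤ d u w) :
    ∀ p : List (Fin 6), 0 ≤ pathCost d p
  | [] => le_refl 0
  | [_] => le_refl 0
  | u :: w :: rest => add_nonneg (hd u w) (pathCost_nonneg hd (w :: rest))

def chainB : List (Fin 6) → Bool
  | u :: w :: rest => cheapB u w && chainB (w :: rest)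
  | _ => true

lemma chainB_of_chain' : ∀ p : List (Fin 6),
    List.Chain' (fun u w => cheapB u w = true) p → chainB p = true
  | [], _ => rfl
  | [_], _ => rfl
  | u :: w :: rest, h => by
    simp only [List.Chain', List.isChain_cons_cons] at h
    simp [chainB, h.1, chainB_of_chain' (w :: rest) h.2]

lemma pathCost_big {M : ℝ} (hM : 0 ≤ M) :
    ∀ p : List (Fin 6), chainB p = false → M ≤ pathCost (dM M) p
  | [], h => by simp [chainB] at h
  | [_], h => by simp [chainB] at h
  | u :: w :: rest, h => by
    simp only [chainB, Bool.and_eq_false_iff] at h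
    rcases h with h | h
    · have h1 : M ≤ dM M u w := dM_big h
      have h2 : 0 ≤ pathCost (dM M) (w :: rest) :=
        pathCost_nonneg (dM_nonneg hM) _
      simp only [pathCost]; linarith
    · have := pathCost_big hM (w :: rest) h
      have h0 : 0 ≤ dM M u w := dM_nonneg hM u w
      simp only [pathCost]; linarith

lemma no_cheap_ham : ∀ a b c e : Fin 6,
    ([0, a, b, c, e, 5] : List (Fin 6)).Nodup → chainB [0, a, b, c, e, 5] = false := by
  decide

/-- Paper's bad-gap example (Section 4): as a relaxation of ATSPP, LP(1/2)
has unbounded integrality gap; for every `D > 0` there is an instance on 6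
vertices with a feasible LP(1/2) solution of cost at most 5 in which every
Hamiltonian `s`-`t` path costs at least `D`. -/
theorem lp_half_unbounded_gap (D : ℝ) (hD : 0 < D) :
    ∃ (s t : Fin 6), s ≠ t ∧
      ∃ (d : Fin 6 → Fin 6 → ℝ) (x : Fin 6 → Fin 6 → ℝ),
        IsAsymMetric d ∧
        LPFeasible s t (1 / 2) x ∧
        (∑ u, ∑ w, d u w * x u w) ≤ 5 ∧
        ∀ p : List (Fin 6), IsHamPath s t p → D ≤ pathCost d p := by
  set M : ℝ := D + 3 with hMdef
  have hM3 : 3 ≤ M := by linarith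
  have hM0 : 0 ≤ M := by linarith
  refine ⟨0, 5, by decide, dM M, xSol, ⟨dM_nonneg hM0, dM_diag, dM_tri hM3⟩, ?_, ?_, ?_⟩
  · refine ⟨xSol_nonneg, ?_, ?_, ?_, ?_, ?_, ?_⟩
    · intro v h0 h5
      fin_cases v <;> simp_all [xSol, Fin.sum_univ_six]
    · simp [xSol, Fin.sum_univ_six]; norm_num
    · simp [xSol, Fin.sum_univ_six]; norm_num
    · simp [xSol, Fin.sum_univ_six]
    · simp [xSol, Fin.sum_univ_six]
    · intro S hne hs
      have key : ∃ u w, u ∉ S ∧ w ∈ S ∧ (1/2 : ℝ) ≤ xSol u w := by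
        by_cases h1 : (1 : Fin 6) ∈ S
        · exact ⟨0, 1, hs, h1, by simp [xSol]⟩
        by_cases h3 : (3 : Fin 6) ∈ S
        · exact ⟨0, 3, hs, h3, by simp [xSol]⟩
        by_cases h2 : (2 : Fin 6) ∈ S
        · exact ⟨1, 2, h1, h2, by simp [xSol]⟩
        by_cases h4 : (4 : Fin 6) ∈ S
        · exact ⟨3, 4, h3, h4, by simp [xSol]⟩
        have h5 : (5 : Fin 6) ∈ S := by
          obtain ⟨v, hv⟩ := hne
          fin_cases v <;> simp_all
        exact ⟨2, 5, h2, h5, by simp [xSol]⟩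
      obtain ⟨u, w, hu, hw, hx⟩ := key
      calc (1/2 : ℝ) ≤ xSol u w := hx
        _ ≤ ∑ u' ∈ Sᶜ, xSol u' w :=
            Finset.single_le_sum (fun i _ => xSol_nonneg i w) (Finset.mem_compl.mpr hu)
        _ ≤ ∑ w' ∈ S, ∑ u' ∈ Sᶜ, xSol u' w' :=
            Finset.single_le_sum
              (fun i _ => Finset.sum_nonneg fun j _ => xSol_nonneg j i) hw
  · simp [dM, cheapB, lv, xSol, Fin.sum_univ_six]; norm_num
  · rintro p ⟨hnd, hmem, hhead, hlast⟩
    have hperm : List.Perm p (List.finRange 6) :=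
      (List.perm_ext_iff_of_nodup hnd (List.nodup_finRange 6)).mpr
        (fun a => by simp [hmem a, List.mem_finRange])
    have hlen : p.length = 6 := by simpa using hperm.length_eq
    rcases p with _ | ⟨v0, _ | ⟨v1, _ | ⟨v2, _ | ⟨v3, _ | ⟨v4, _ | ⟨v5, _ | ⟨v6, rest⟩⟩⟩⟩⟩⟩⟩ <;>
      simp only [List.length] at hlen <;> try omega
    have h0 : v0 = 0 := by simpa using hhead
    have h5 : v5 = 5 := by simpa using hlast
    subst h0 h5
    have hch : chainB [0, v1, v2, v3, v4, 5] = false := no_cheap_ham v1 v2 v3 v4 hnd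
    have := pathCost_big hM0 _ hch
    linarith
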